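/- Let R : (0,∞) → ℝ be continuous and let P be twice differentiable on (0,∞) satisfying r·(P'(r)/r)' = R(r)²·P(r) for all r > 0 (equivalently P'' = P'/r + R²P). Suppose at some point a > 0 one has P(a) ≥ 0 and P'(a) > 0. Then for all r > a: P(r) > 0 and P'(r) > 0, and both P and P' are strictly monotonically increasing on (a,∞). -/

import Mathlib

open Set

/-- For the flat-space Yang–Mills `P`-equation
`r (P'/r)' = R² P` with a continuous given function `R` on `(0,∞)`: if at
some `a > 0` one has `P a ≥ 0` and `P' a > 0`, then `P` and `P'` are positive
and strictly increasing on `(a,∞)`. -/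
theorem stmt_2 (R P P' : ℝ → ℝ) (a : ℝ) (ha : 0 < a)
    (hRcont : ContinuousOn R (Ioi 0))
    (hPderiv : ∀ r ∈ Ioi (0 : ℝ), HasDerivAt P (P' r) r)
    (hP'' : ∀ r > (0 : ℝ), DifferentiableAt ℝ (fun s => P' s / s) r)
    (hode : ∀ r > (0 : ℝ), r * deriv (fun s => P' s / s) r = (R r) ^ 2 * P r)
    (hPa : 0 ≤ P a) (hP'a : 0 < P' a) :
    (∀ r > a, 0 < P r ∧ 0 < P' r) ∧
      StrictMonoOn P (Ioi a) ∧ StrictMonoOn P' (Ioi a) := by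
  set Q : ℝ → ℝ := fun s => P' s / s with hQ
  -- eventual equality P' = Q * id near any r > 0
  have heq : ∀ r > (0:ℝ), P' =ᶠ[nhds r] fun s => Q s * s := by
    intro r hr
    filter_upwards [Ioi_mem_nhds hr] with s hs
    simp [hQ, div_mul_cancel₀ _ (ne_of_gt (mem_Ioi.mp hs))]
  have hP'diff : ∀ r > (0:ℝ), DifferentiableAt ℝ P' r := by
    intro r hr
    exact ((hP'' r hr).mul differentiableAt_id).congr_of_eventuallyEq (heq r hr)
  have hderivQ : ∀ r > (0:ℝ), deriv Q r = (R r) ^ 2 * P r / r := by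
    intro r hr
    have := hode r hr
    field_simp
    linarith [hode r hr]
  have hderivP' : ∀ r > (0:ℝ), deriv P' r = (R r) ^ 2 * P r + P' r / r := by
    intro r hr
    have hd : deriv (fun s => Q s * s) r = deriv Q r * r + Q r * 1 :=
      (((hP'' r hr).hasDerivAt).mul (hasDerivAt_id r)).deriv
    rw [(heq r hr).deriv_eq, hd, hderivQ r hr,
      div_mul_cancel₀ _ (ne_of_gt hr), mul_one]
  have hderivP : ∀ r > (0:ℝ), deriv P r = P' r := fun r hr => (hPderiv r hr).deriv
  -- key claim: P' > 0 on [a, ∞)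
  have key : ∀ s, a ≤ s → 0 < P' s := by
    by_contra h
    push_neg at h
    obtain ⟨s₀, hs₀a, hs₀⟩ := h
    have hP'cont : ContinuousOn P' (Ici a) := fun s hs =>
      (hP'diff s (lt_of_lt_of_le ha hs)).continuousAt.continuousWithinAt
    set S := {s : ℝ | a ≤ s ∧ P' s ≤ 0} with hS
    have hSsub : S = Ici a ∩ P' ⁻¹' Iic 0 := by
      ext x; simp [hS, and_comm]
    have hScl : IsClosed S := by
      rw [hSsub]
      exact hP'cont.preimage_isClosed_of_isClosed isClosed_Ici isClosed_Iic
    have hSne : S.Nonempty := ⟨s₀, hs₀a, hs₀⟩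
    have hSbdd : BddBelow S := ⟨a, fun x hx => hx.1⟩
    have hmem := hScl.csInf_mem hSne hSbdd
    have hab : a ≤ sInf S := hmem.1
    have hP'b : P' (sInf S) ≤ 0 := hmem.2
    have hba : a < sInf S := lt_of_le_of_ne hab (fun hc => by
      rw [← hc] at hP'b; linarith)
    have hb0 : (0:ℝ) < sInf S := ha.trans hba
    have hP'pos : ∀ s ∈ Ico a (sInf S), 0 < P' s := by
      intro s hs
      by_contra hc
      push_neg at hc
      exact absurd (csInf_le hSbdd ⟨hs.1, hc⟩) (not_le.mpr hs.2)
    have hIcc : Icc a (sInf S) ⊆ Ioi (0:ℝ) := fun x hx => lt_of_lt_of_le ha hx.1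
    have hPcont : ContinuousOn P (Icc a (sInf S)) := fun x hx =>
      (hPderiv x (hIcc hx)).continuousAt.continuousWithinAt
    have hPmono : StrictMonoOn P (Icc a (sInf S)) := by
      apply strictMonoOn_of_deriv_pos (convex_Icc a (sInf S)) hPcont
      intro x hx
      rw [interior_Icc] at hx
      rw [hderivP x (ha.trans hx.1)]
      exact hP'pos x ⟨hx.1.le, hx.2⟩
    have hPnn : ∀ s ∈ Icc a (sInf S), 0 ≤ P s := by
      intro s hs
      rcases eq_or_lt_of_le hs.1 with rfl | h
      · exact hPa
      · exact le_trans hPa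
          (hPmono (left_mem_Icc.mpr hba.le) hs h).le
    have hQcont : ContinuousOn Q (Icc a (sInf S)) := fun x hx =>
      (hP'' x (hIcc hx)).continuousAt.continuousWithinAt
    have hQmono : MonotoneOn Q (Icc a (sInf S)) := by
      apply monotoneOn_of_deriv_nonneg (convex_Icc a (sInf S)) hQcont
      · intro x hx
        rw [interior_Icc] at hx
        exact ((hP'' x (ha.trans hx.1)).differentiableWithinAt)
      · intro x hx
        rw [interior_Icc] at hx
        have hx0 : (0:ℝ) < x := ha.trans hx.1
        rw [hderivQ x hx0]
        have := hPnn x ⟨hx.1.le, hx.2.le⟩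
        positivity
    have hQa : 0 < Q a := div_pos hP'a ha
    have hQb : 0 < Q (sInf S) := lt_of_lt_of_le hQa
      (hQmono (left_mem_Icc.mpr hba.le) (right_mem_Icc.mpr hba.le) hba.le)
    have : 0 < P' (sInf S) := by
      have := mul_pos hQb hb0
      rwa [hQ, div_mul_cancel₀ _ (ne_of_gt hb0)] at this
    linarith
  -- P strictly mono on [a, ∞)
  have hPcont : ContinuousOn P (Ici a) := fun x hx =>
    (hPderiv x (lt_of_lt_of_le ha hx)).continuousAt.continuousWithinAt
  have hPmono : StrictMonoOn P (Ici a) := by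
    apply strictMonoOn_of_deriv_pos (convex_Ici a) hPcont
    intro x hx
    rw [interior_Ici] at hx
    rw [hderivP x (ha.trans hx)]
    exact key x hx.le
  have hPpos : ∀ r > a, 0 < P r := fun r hr =>
    lt_of_le_of_lt hPa (hPmono (self_mem_Ici) (le_of_lt hr) hr)
  refine ⟨fun r hr => ⟨hPpos r hr, key r hr.le⟩, hPmono.mono Ioi_subset_Ici_self, ?_⟩
  -- P' strictly mono on (a, ∞)
  apply strictMonoOn_of_deriv_pos (convex_Ioi a)
  · exact fun x hx => (hP'diff x (ha.trans hx)).continuousAt.continuousWithinAt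
  · intro x hx
    rw [interior_Ioi] at hx
    have hx0 : (0:ℝ) < x := ha.trans hx
    rw [hderivP' x hx0]
    have h1 := hPpos x hx
    have h2 := key x hx.le
    have : 0 < P' x / x := div_pos h2 hx0
    nlinarith [sq_nonneg (R x)]
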